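/- Let E and F be complex inner product spaces, let k be a positive natural number, let L be a k-dimensional subspace of E, let Φ : E → F be a linear map, and let q : E → ℝ and q' : F → ℝ be functions. Suppose there are constants c ≥ 0, δ' ∈ [0,1) and δ'' ≥ 0 such that for every u ∈ L one has 0 ≤ q(u) ≤ c·‖u‖², ‖u‖² − ‖Φu‖² ≤ δ'·‖u‖², and q'(Φu) − q(u) ≤ δ''·‖u‖². Then Λ_k(q',F) ≤ sup_{u ∈ L, u ≠ 0} q(u)/‖u‖² + (c·δ' + δ'')/(1 − δ'). -/

import Mathlib

open Module

/-- The `k`-th variational (min-max) value of a function `q' : F → ℝ`: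
the infimum over all `k`-dimensional subspaces `W` of `F` of
`sup_{v ∈ W, v ≠ 0} q'(v)/‖v‖²`. -/
noncomputable def minMaxVal {F : Type*} [NormedAddCommGroup F] [InnerProductSpace ℂ F]
    (k : ℕ) (q' : F → ℝ) : ℝ :=
  sInf { r : ℝ | ∃ W : Submodule ℂ F, finrank ℂ W = k ∧
    r = sSup { s : ℝ | ∃ v ∈ W, v ≠ 0 ∧ s = q' v / ‖v‖ ^ 2 } }

theorem main_lemma_quantitative
    {E F : Type*} [NormedAddCommGroup E] [InnerProductSpace ℂ E]
    [NormedAddCommGroup F] [InnerProductSpace ℂ F]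
    (k : ℕ) (hk : 0 < k) (L : Submodule ℂ E) (hL : finrank ℂ L = k)
    (Φ : E →ₗ[ℂ] F) (q : E → ℝ) (q' : F → ℝ)
    (c δ' δ'' : ℝ) (hc : 0 ≤ c) (hδ'0 : 0 ≤ δ') (hδ'1 : δ' < 1) (hδ'' : 0 ≤ δ'')
    (hq0 : ∀ u ∈ L, 0 ≤ q u)
    (hqc : ∀ u ∈ L, q u ≤ c * ‖u‖ ^ 2)
    (hnorm : ∀ u ∈ L, ‖u‖ ^ 2 - ‖Φ u‖ ^ 2 ≤ δ' * ‖u‖ ^ 2)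
    (hquad : ∀ u ∈ L, q' (Φ u) - q u ≤ δ'' * ‖u‖ ^ 2) :
    minMaxVal k q' ≤
      sSup { s : ℝ | ∃ u ∈ L, u ≠ 0 ∧ s = q u / ‖u‖ ^ 2 } +
        (c * δ' + δ'') / (1 - δ') := by
  have h1δ : (0:ℝ) < 1 - δ' := by linarith
  set err : ℝ := (c * δ' + δ'') / (1 - δ') with herrdef
  have herr : 0 ≤ err := div_nonneg (by positivity) h1δ.le
  set SL := { s : ℝ | ∃ u ∈ L, u ≠ 0 ∧ s = q u / ‖u‖ ^ 2 } with hSLdef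
  -- L is finite dimensional and nontrivial
  haveI : FiniteDimensional ℂ L := FiniteDimensional.of_finrank_pos (by rw [hL]; exact hk)
  have hLne : L ≠ ⊥ := by
    intro h
    rw [h, finrank_bot] at hL
    omega
  obtain ⟨u₀, hu₀L, hu₀⟩ := Submodule.exists_mem_ne_zero_of_ne_bot hLne
  -- norm lower bound for Φ on L
  have hΦnorm : ∀ u ∈ L, (1 - δ') * ‖u‖ ^ 2 ≤ ‖Φ u‖ ^ 2 := by
    intro u hu
    have := hnorm u hu
    nlinarith
  have hΦne : ∀ u ∈ L, u ≠ 0 → Φ u ≠ 0 := by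
    intro u hu hune h0
    have h1 := hΦnorm u hu
    rw [h0, norm_zero] at h1
    have : (0:ℝ) < ‖u‖ ^ 2 := pow_pos (norm_pos_iff.mpr hune) 2
    nlinarith
  -- SL facts
  have hSLne : SL.Nonempty := ⟨q u₀ / ‖u₀‖ ^ 2, u₀, hu₀L, hu₀, rfl⟩
  have hSLbdd : BddAbove SL := by
    refine ⟨c, ?_⟩
    rintro s ⟨u, hu, hune, rfl⟩
    have hn : (0:ℝ) < ‖u‖ ^ 2 := pow_pos (norm_pos_iff.mpr hune) 2
    rw [div_le_iff₀ hn]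
    exact hqc u hu
  have hSL0 : 0 ≤ sSup SL := by
    refine le_trans ?_ (le_csSup hSLbdd hSLne.choose_spec)
    obtain ⟨u, hu, hune, hs⟩ := hSLne.choose_spec
    rw [hs]
    have hn : (0:ℝ) < ‖u‖ ^ 2 := pow_pos (norm_pos_iff.mpr hune) 2
    exact div_nonneg (hq0 u hu) hn.le
  -- the image subspace
  set W := L.map Φ with hWdef
  have hΦinj : Function.Injective (Φ.domRestrict L) := by
    rw [← LinearMap.ker_eq_bot, LinearMap.ker_eq_bot']
    rintro ⟨u, hu⟩ h0
    have : Φ u = 0 := h0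
    ext
    by_contra hune
    exact hΦne u hu hune this
  have hWrank : finrank ℂ W = k := by
    have := LinearMap.finrank_range_of_inj hΦinj
    rwa [LinearMap.range_domRestrict, hL] at this
  -- key pointwise bound
  have hkey : ∀ s ∈ { s : ℝ | ∃ v ∈ W, v ≠ 0 ∧ s = q' v / ‖v‖ ^ 2 },
      s ≤ sSup SL + err := by
    rintro s ⟨v, hv, hvne, rfl⟩
    obtain ⟨u, hu, rfl⟩ := hv
    have hune : u ≠ 0 := by rintro rfl; exact hvne (map_zero Φ)
    have hn : (0:ℝ) < ‖u‖ ^ 2 := pow_pos (norm_pos_iff.mpr hune) 2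
    have hvn : (0:ℝ) < ‖Φ u‖ ^ 2 := by
      have := norm_pos_iff.mpr hvne
      positivity
    have hM0 : 0 ≤ q u / ‖u‖ ^ 2 + err :=
      add_nonneg (div_nonneg (hq0 u hu) hn.le) herr
    have hstep : q' (Φ u) / ‖Φ u‖ ^ 2 ≤ q u / ‖u‖ ^ 2 + err := by
      rw [div_le_iff₀ hvn]
      have h1 := hΦnorm u hu
      have h2 := hquad u hu
      have h3 := hqc u hu
      have h4 := hq0 u hu
      have hstep2 : q' (Φ u) ≤ (q u / ‖u‖ ^ 2 + err) * ((1 - δ') * ‖u‖ ^ 2) := by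
        have heq : (q u / ‖u‖ ^ 2 + err) * ((1 - δ') * ‖u‖ ^ 2)
            = (1 - δ') * q u + (c * δ' + δ'') * ‖u‖ ^ 2 := by
          rw [herrdef]
          field_simp
        rw [heq]
        nlinarith
      calc q' (Φ u) ≤ (q u / ‖u‖ ^ 2 + err) * ((1 - δ') * ‖u‖ ^ 2) := hstep2
        _ ≤ (q u / ‖u‖ ^ 2 + err) * ‖Φ u‖ ^ 2 :=
          mul_le_mul_of_nonneg_left (hΦnorm u hu) hM0
    refine hstep.trans (add_le_add ?_ (le_refl err))
    exact le_csSup hSLbdd ⟨u, hu, hune, rfl⟩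
  -- the candidate value in the min-max set
  set r₀ := sSup { s : ℝ | ∃ v ∈ W, v ≠ 0 ∧ s = q' v / ‖v‖ ^ 2 } with hr₀def
  have hWsetne : { s : ℝ | ∃ v ∈ W, v ≠ 0 ∧ s = q' v / ‖v‖ ^ 2 }.Nonempty :=
    ⟨q' (Φ u₀) / ‖Φ u₀‖ ^ 2, Φ u₀, ⟨u₀, hu₀L, rfl⟩, hΦne u₀ hu₀L hu₀, rfl⟩
  have hr₀le : r₀ ≤ sSup SL + err := csSup_le hWsetne hkey
  have hmem : r₀ ∈ { r : ℝ | ∃ W : Submodule ℂ F, finrank ℂ W = k ∧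
      r = sSup { s : ℝ | ∃ v ∈ W, v ≠ 0 ∧ s = q' v / ‖v‖ ^ 2 } } :=
    ⟨W, hWrank, rfl⟩
  by_cases hbdd : BddBelow { r : ℝ | ∃ W : Submodule ℂ F, finrank ℂ W = k ∧
      r = sSup { s : ℝ | ∃ v ∈ W, v ≠ 0 ∧ s = q' v / ‖v‖ ^ 2 } }
  · exact le_trans (csInf_le hbdd hmem) hr₀le
  · rw [minMaxVal, Real.sInf_of_not_bddBelow hbdd]
    exact add_nonneg hSL0 herr
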